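/- Let T ≥ 2/π. Then the function 1 - Φ_T is (T²/2)-strongly convex on [-1/(2T), 1/(2T)]; equivalently, -Φ_T''(x) ≥ T²/2 for all x with |x| ≤ 1/(2T). -/

import Mathlib

open Real Filter Topology

noncomputable def periodicGaussian (T : ℝ) (x : ℝ) : ℝ :=
  (∑' j : ℤ, Real.exp (-(x + 2 * j * π) ^ 2 * T ^ 2 / 2)) /
  (∑' j : ℤ, Real.exp (-(2 * j * π) ^ 2 * T ^ 2 / 2))

namespace PGaux

noncomputable def F (T : ℝ) (j : ℤ) (x : ℝ) : ℝ := Real.exp (-(x + 2 * j * π) ^ 2 * T ^ 2 / 2)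
noncomputable def G (T : ℝ) (j : ℤ) (x : ℝ) : ℝ :=
  (-(x + 2 * j * π) * T ^ 2) * Real.exp (-(x + 2 * j * π) ^ 2 * T ^ 2 / 2)
noncomputable def H (T : ℝ) (j : ℤ) (x : ℝ) : ℝ :=
  ((x + 2 * j * π) ^ 2 * T ^ 2 * T ^ 2 - T ^ 2) * Real.exp (-(x + 2 * j * π) ^ 2 * T ^ 2 / 2)

lemma hasDerivAt_F (T : ℝ) (j : ℤ) (x : ℝ) : HasDerivAt (F T j) (G T j x) x := by
  have h0 : HasDerivAt (fun y : ℝ => y + 2 * j * π) 1 x := (hasDerivAt_id x).add_const _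
  have h1 : HasDerivAt (fun y : ℝ => -(y + 2 * j * π) ^ 2 * T ^ 2 / 2)
      (-(x + 2 * j * π) * T ^ 2) x := by
    have h2 := ((h0.fun_pow 2).fun_neg.mul_const (T ^ 2)).div_const 2
    exact h2.congr_deriv (by ring)
  have h3 := h1.exp
  unfold F G
  convert h3 using 1
  ring

lemma hasDerivAt_G (T : ℝ) (j : ℤ) (x : ℝ) : HasDerivAt (G T j) (H T j x) x := by
  have h0 : HasDerivAt (fun y : ℝ => y + 2 * j * π) 1 x := (hasDerivAt_id x).add_const _
  have h1 : HasDerivAt (fun y : ℝ => -(y + 2 * j * π) ^ 2 * T ^ 2 / 2)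
      (-(x + 2 * j * π) * T ^ 2) x := by
    have h2 := ((h0.fun_pow 2).fun_neg.mul_const (T ^ 2)).div_const 2
    exact h2.congr_deriv (by ring)
  have hlin : HasDerivAt (fun y : ℝ => -(y + 2 * j * π) * T ^ 2) (-T ^ 2) x := by
    have := (h0.fun_neg.mul_const (T ^ 2))
    exact this.congr_deriv (by ring)
  have h3 := hlin.mul h1.exp
  unfold G H
  exact h3.congr_deriv (by ring)


noncomputable def e' (T : ℝ) (n : ℕ) : ℝ :=
  Real.exp (-(max (2 * π * n - 1) 0) ^ 2 * T ^ 2 / 2)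

noncomputable def E (T : ℝ) (j : ℤ) : ℝ := e' T j.natAbs

lemma abs_int_cast (j : ℤ) : |(j : ℝ)| = (j.natAbs : ℝ) := by
  rw [Nat.cast_natAbs, Int.cast_abs]

lemma abs_u_lower {x : ℝ} (hx : |x| ≤ 1) (j : ℤ) :
    max (2 * π * j.natAbs - 1) 0 ≤ |x + 2 * j * π| := by
  have h2 : |2 * (j:ℝ) * π| = 2 * π * j.natAbs := by
    rw [abs_mul, abs_mul, abs_of_nonneg Real.pi_pos.le, abs_int_cast, abs_two]
    ring
  have h3 : |2 * (j:ℝ) * π| - |x| ≤ |x + 2 * j * π| := by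
    have := abs_sub_abs_le_abs_sub (2 * (j:ℝ) * π) (-x)
    simp only [abs_neg, sub_neg_eq_add] at this
    calc |2 * (j:ℝ) * π| - |x| ≤ |2 * (j:ℝ) * π + x| := this
      _ = |x + 2 * j * π| := by rw [add_comm]
  refine max_le ?_ (abs_nonneg _)
  rw [h2] at h3; linarith

lemma exp_le_E {T x : ℝ} (hx : |x| ≤ 1) (j : ℤ) :
    Real.exp (-(x + 2 * j * π) ^ 2 * T ^ 2 / 2) ≤ E T j := by
  apply Real.exp_le_exp.2
  have h1 := abs_u_lower hx j
  have h2 : (max (2 * π * j.natAbs - 1) 0) ^ 2 ≤ (x + 2 * j * π) ^ 2 := by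
    rw [← sq_abs (x + 2 * j * π)]
    exact pow_le_pow_left₀ (le_max_right _ _) h1 2
  have hT2 : (0:ℝ) ≤ T ^ 2 := sq_nonneg T
  nlinarith

lemma abs_u_upper {x : ℝ} (hx : |x| ≤ 1) (j : ℤ) :
    |x + 2 * j * π| ≤ 2 * π * j.natAbs + 1 := by
  have h2 : |2 * (j:ℝ) * π| = 2 * π * j.natAbs := by
    rw [abs_mul, abs_mul, abs_of_nonneg Real.pi_pos.le, abs_int_cast, abs_two]
    ring
  calc |x + 2 * j * π| ≤ |x| + |2 * (j:ℝ) * π| := abs_add_le _ _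
    _ ≤ 2 * π * j.natAbs + 1 := by rw [h2]; linarith

lemma summable_poly_nat {T : ℝ} (hT : 0 < T) (c₀ c₁ c₂ : ℝ) (h₀ : 0 ≤ c₀) (h₁ : 0 ≤ c₁)
    (h₂ : 0 ≤ c₂) :
    Summable (fun n : ℕ => (c₀ + c₁ * n + c₂ * (n:ℝ) ^ 2) * e' T n) := by
  set ρ := Real.exp (-(T ^ 2 / 2)) with hρdef
  have hρ0 : 0 ≤ ρ := (Real.exp_pos _).le
  have hρ1 : ρ < 1 := by
    rw [hρdef, Real.exp_lt_one_iff]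
    nlinarith
  have hρn : ‖ρ‖ < 1 := by rwa [Real.norm_eq_abs, abs_of_nonneg hρ0]
  have hg : Summable (fun n : ℕ =>
      Real.exp (T ^ 2 / 2) * (c₀ * ρ ^ n + c₁ * ((n:ℝ) ^ 1 * ρ ^ n) + c₂ * ((n:ℝ) ^ 2 * ρ ^ n))) := by
    apply Summable.mul_left
    exact (((summable_geometric_of_lt_one hρ0 hρ1).mul_left c₀).add
      ((summable_pow_mul_geometric_of_norm_lt_one 1 hρn).mul_left c₁)).add
      ((summable_pow_mul_geometric_of_norm_lt_one 2 hρn).mul_left c₂)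
  apply Summable.of_nonneg_of_le ?_ ?_ hg
  · intro n
    have := (Real.exp_pos (-(max (2 * π * n - 1) 0) ^ 2 * T ^ 2 / 2)).le
    unfold e'
    positivity
  · intro n
    have hkey : e' T n ≤ Real.exp (T ^ 2 / 2) * ρ ^ n := by
      rw [hρdef, ← Real.exp_nat_mul, ← Real.exp_add]
      apply Real.exp_le_exp.2
      have hπ := Real.pi_gt_three
      rcases Nat.eq_zero_or_pos n with h | h
      · subst h; simp; nlinarith
      · have hn1 : (1:ℝ) ≤ n := by exact_mod_cast h
        have hmx : max (2 * π * n - 1) 0 = 2 * π * n - 1 := by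
          apply max_eq_left; nlinarith
        rw [hmx]
        have hsq : (n:ℝ) ≤ (2 * π * n - 1) ^ 2 := by
          have h6 : (6 * (n:ℝ) - 1) ≤ 2 * π * n - 1 := by nlinarith
          have h60 : (0:ℝ) ≤ 6 * n - 1 := by nlinarith
          have hms := mul_self_le_mul_self h60 h6
          nlinarith
        nlinarith [sq_nonneg T]
    have hpoly : (0:ℝ) ≤ c₀ + c₁ * n + c₂ * (n:ℝ) ^ 2 := by positivity
    calc (c₀ + c₁ * n + c₂ * (n:ℝ) ^ 2) * e' T n
        ≤ (c₀ + c₁ * n + c₂ * (n:ℝ) ^ 2) * (Real.exp (T ^ 2 / 2) * ρ ^ n) := by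
          exact mul_le_mul_of_nonneg_left hkey hpoly
      _ = Real.exp (T ^ 2 / 2) * (c₀ * ρ ^ n + c₁ * ((n:ℝ) ^ 1 * ρ ^ n) + c₂ * ((n:ℝ) ^ 2 * ρ ^ n)) := by
          ring

lemma summable_poly {T : ℝ} (hT : 0 < T) (c₀ c₁ c₂ : ℝ) (h₀ : 0 ≤ c₀) (h₁ : 0 ≤ c₁)
    (h₂ : 0 ≤ c₂) :
    Summable (fun j : ℤ => (c₀ + c₁ * j.natAbs + c₂ * (j.natAbs:ℝ) ^ 2) * E T j) := by
  have hnat := summable_poly_nat hT c₀ c₁ c₂ h₀ h₁ h₂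
  apply Summable.of_nat_of_neg
  · simpa [E] using hnat
  · simpa [E] using hnat


lemma norm_F_le {T x : ℝ} (hx : |x| ≤ 1) (j : ℤ) :
    ‖F T j x‖ ≤ (1 + 0 * j.natAbs + 0 * (j.natAbs:ℝ) ^ 2) * E T j := by
  have h := exp_le_E (T := T) hx j
  rw [F, Real.norm_eq_abs, abs_of_pos (Real.exp_pos _)]
  simpa using h

lemma norm_G_le {T x : ℝ} (hx : |x| ≤ 1) (j : ℤ) :
    ‖G T j x‖ ≤ (T ^ 2 + (2 * π * T ^ 2) * j.natAbs + 0 * (j.natAbs:ℝ) ^ 2) * E T j := by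
  have h := exp_le_E (T := T) hx j
  have hu := abs_u_upper hx j
  have hE0 : 0 < E T j := Real.exp_pos _
  have hF0 : (0:ℝ) < Real.exp (-(x + 2 * j * π) ^ 2 * T ^ 2 / 2) := Real.exp_pos _
  have hT2 : (0:ℝ) ≤ T ^ 2 := sq_nonneg T
  rw [G, Real.norm_eq_abs, abs_mul, abs_of_pos hF0, abs_mul, abs_neg, abs_of_nonneg hT2]
  have hn : (0:ℝ) ≤ (j.natAbs : ℝ) := Nat.cast_nonneg _
  have hπ := Real.pi_pos
  calc |x + 2 * j * π| * T ^ 2 * Real.exp (-(x + 2 * j * π) ^ 2 * T ^ 2 / 2)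
      ≤ (2 * π * j.natAbs + 1) * T ^ 2 * E T j := by
        apply mul_le_mul _ h hF0.le (by positivity)
        apply mul_le_mul_of_nonneg_right hu hT2
    _ = (T ^ 2 + (2 * π * T ^ 2) * j.natAbs + 0 * (j.natAbs:ℝ) ^ 2) * E T j := by ring

lemma norm_H_le {T x : ℝ} (hx : |x| ≤ 1) (j : ℤ) :
    ‖H T j x‖ ≤ ((T ^ 2 * T ^ 2 + T ^ 2) + (4 * π * (T ^ 2 * T ^ 2)) * j.natAbs
      + (4 * π ^ 2 * (T ^ 2 * T ^ 2)) * (j.natAbs:ℝ) ^ 2) * E T j := by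
  have h := exp_le_E (T := T) hx j
  have hu := abs_u_upper hx j
  have hF0 : (0:ℝ) < Real.exp (-(x + 2 * j * π) ^ 2 * T ^ 2 / 2) := Real.exp_pos _
  have hT2 : (0:ℝ) ≤ T ^ 2 := sq_nonneg T
  have hn : (0:ℝ) ≤ (j.natAbs : ℝ) := Nat.cast_nonneg _
  have hπ := Real.pi_pos
  have hu2 : (x + 2 * j * π) ^ 2 ≤ (2 * π * j.natAbs + 1) ^ 2 := by
    rw [← sq_abs (x + 2 * j * π)]
    exact pow_le_pow_left₀ (abs_nonneg _) hu 2
  have habs : |(x + 2 * j * π) ^ 2 * T ^ 2 * T ^ 2 - T ^ 2|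
      ≤ (2 * π * j.natAbs + 1) ^ 2 * (T ^ 2 * T ^ 2) + T ^ 2 := by
    rw [abs_le]
    constructor
    · nlinarith [sq_nonneg (x + 2 * j * π)]
    · nlinarith [sq_nonneg (x + 2 * j * π)]
  rw [H, Real.norm_eq_abs, abs_mul, abs_of_pos hF0]
  calc |(x + 2 * j * π) ^ 2 * T ^ 2 * T ^ 2 - T ^ 2| * Real.exp (-(x + 2 * j * π) ^ 2 * T ^ 2 / 2)
      ≤ ((2 * π * j.natAbs + 1) ^ 2 * (T ^ 2 * T ^ 2) + T ^ 2) * E T j := by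
        apply mul_le_mul habs h hF0.le (by positivity)
    _ = ((T ^ 2 * T ^ 2 + T ^ 2) + (4 * π * (T ^ 2 * T ^ 2)) * j.natAbs
        + (4 * π ^ 2 * (T ^ 2 * T ^ 2)) * (j.natAbs:ℝ) ^ 2) * E T j := by ring

lemma mem_ball_abs {x : ℝ} (hx : x ∈ Metric.ball (0:ℝ) 1) : |x| ≤ 1 := by
  rw [Metric.mem_ball, Real.dist_eq, sub_zero] at hx
  exact hx.le

lemma summable_F {T : ℝ} (hT : 0 < T) {x : ℝ} (hx : |x| ≤ 1) :
    Summable (fun j : ℤ => F T j x) := by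
  apply Summable.of_norm
  apply Summable.of_nonneg_of_le (fun j => norm_nonneg _) (fun j => norm_F_le hx j)
  exact summable_poly hT 1 0 0 (by norm_num) le_rfl le_rfl

lemma summable_G {T : ℝ} (hT : 0 < T) {x : ℝ} (hx : |x| ≤ 1) :
    Summable (fun j : ℤ => G T j x) := by
  apply Summable.of_norm
  apply Summable.of_nonneg_of_le (fun j => norm_nonneg _) (fun j => norm_G_le hx j)
  have hπ := Real.pi_pos
  exact summable_poly hT _ _ _ (sq_nonneg T) (by positivity) le_rfl

lemma summable_H {T : ℝ} (hT : 0 < T) {x : ℝ} (hx : |x| ≤ 1) :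
    Summable (fun j : ℤ => H T j x) := by
  apply Summable.of_norm
  apply Summable.of_nonneg_of_le (fun j => norm_nonneg _) (fun j => norm_H_le hx j)
  have hπ := Real.pi_pos
  exact summable_poly hT _ _ _ (by positivity) (by positivity) (by positivity)

lemma hasDerivAt_tsum_F {T : ℝ} (hT : 0 < T) {x : ℝ} (hx : x ∈ Metric.ball (0:ℝ) 1) :
    HasDerivAt (fun y => ∑' j : ℤ, F T j y) (∑' j : ℤ, G T j x) x := by
  apply hasDerivAt_of_tendstoUniformlyOn (l := (atTop : Filter (Finset ℤ))) Metric.isOpen_ball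
    (f := fun (t : Finset ℤ) (y : ℝ) => ∑ j ∈ t, F T j y)
    (f' := fun (t : Finset ℤ) (y : ℝ) => ∑ j ∈ t, G T j y) ?_ ?_ ?_ hx
  · apply tendstoUniformlyOn_tsum
      (u := fun j : ℤ => (T ^ 2 + (2 * π * T ^ 2) * j.natAbs + 0 * (j.natAbs:ℝ) ^ 2) * E T j)
    · have hπ := Real.pi_pos
      exact summable_poly hT _ _ _ (sq_nonneg T) (by positivity) le_rfl
    · intro j y hy
      exact norm_G_le (mem_ball_abs hy) j
  · apply Filter.Eventually.of_forall
    intro t y hy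
    exact HasDerivAt.fun_sum (fun j _ => hasDerivAt_F T j y)
  · intro y hy
    exact (summable_F hT (mem_ball_abs hy)).hasSum

lemma hasDerivAt_tsum_G {T : ℝ} (hT : 0 < T) {x : ℝ} (hx : x ∈ Metric.ball (0:ℝ) 1) :
    HasDerivAt (fun y => ∑' j : ℤ, G T j y) (∑' j : ℤ, H T j x) x := by
  apply hasDerivAt_of_tendstoUniformlyOn (l := (atTop : Filter (Finset ℤ))) Metric.isOpen_ball
    (f := fun (t : Finset ℤ) (y : ℝ) => ∑ j ∈ t, G T j y)
    (f' := fun (t : Finset ℤ) (y : ℝ) => ∑ j ∈ t, H T j y) ?_ ?_ ?_ hx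
  · apply tendstoUniformlyOn_tsum
      (u := fun j : ℤ => ((T ^ 2 * T ^ 2 + T ^ 2) + (4 * π * (T ^ 2 * T ^ 2)) * j.natAbs
        + (4 * π ^ 2 * (T ^ 2 * T ^ 2)) * (j.natAbs:ℝ) ^ 2) * E T j)
    · have hπ := Real.pi_pos
      exact summable_poly hT _ _ _ (by positivity) (by positivity) (by positivity)
    · intro j y hy
      exact norm_H_le (mem_ball_abs hy) j
  · apply Filter.Eventually.of_forall
    intro t y hy
    exact HasDerivAt.fun_sum (fun j _ => hasDerivAt_G T j y)
  · intro y hy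
    exact (summable_G hT (mem_ball_abs hy)).hasSum

set_option maxHeartbeats 1000000 in
lemma hasSum_geom_int {r : ℝ} (h0 : 0 ≤ r) (h1 : r < 1) :
    HasSum (fun j : ℤ => if j = 0 then (0:ℝ) else r ^ j.natAbs)
      (r / (1 - r) + 0 + r / (1 - r)) := by
  have hg : HasSum (fun n : ℕ => r ^ (n + 1)) (r / (1 - r)) := by
    have h2 := (hasSum_geometric_of_lt_one h0 h1).mul_left r
    have heq : (fun n : ℕ => r * r ^ n) = fun n : ℕ => r ^ (n + 1) := by
      funext n; rw [pow_succ, mul_comm]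
    rw [heq] at h2
    simpa [div_eq_mul_inv] using h2
  have hpos : HasSum (fun n : ℕ => if ((n:ℤ)) = 0 then (0:ℝ) else r ^ ((n:ℤ)).natAbs)
      (r / (1 - r) + 0) := by
    have hshift : HasSum (fun n : ℕ => if (((n + 1 : ℕ):ℤ)) = 0 then (0:ℝ)
        else r ^ (((n + 1 : ℕ):ℤ)).natAbs) (r / (1 - r)) := by
      have heq2 : (fun n : ℕ => if (((n + 1 : ℕ):ℤ)) = 0 then (0:ℝ)
          else r ^ (((n + 1 : ℕ):ℤ)).natAbs) = fun n : ℕ => r ^ (n + 1) := by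
        funext n
        rw [if_neg (by exact_mod_cast Nat.succ_ne_zero n)]
        have hh : (((n + 1 : ℕ):ℤ)).natAbs = n + 1 := by omega
        rw [hh]
      rw [heq2]; exact hg
    have h2 := (hasSum_nat_add_iff
      (f := fun n : ℕ => if ((n:ℤ)) = 0 then (0:ℝ) else r ^ ((n:ℤ)).natAbs) 1).1 hshift
    simpa using h2
  have hneg : HasSum (fun n : ℕ => if (-((n:ℤ) + 1)) = 0 then (0:ℝ)
      else r ^ ((-((n:ℤ) + 1)).natAbs)) (r / (1 - r)) := by
    have heq3 : (fun n : ℕ => if (-((n:ℤ) + 1)) = 0 then (0:ℝ)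
        else r ^ ((-((n:ℤ) + 1)).natAbs)) = fun n : ℕ => r ^ (n + 1) := by
      funext n
      rw [if_neg (by omega)]
      have : (-((n:ℤ) + 1)).natAbs = n + 1 := by omega
      rw [this]
    rw [heq3]; exact hg
  exact hpos.of_nat_of_neg_add_one hneg



lemma key_sq {s : ℝ} (hs : 0 ≤ s) : (1 + s / 2) ^ 2 ≤ Real.exp s := by
  have h := Real.add_one_le_exp (s / 2)
  have h2 : Real.exp s = Real.exp (s / 2) * Real.exp (s / 2) := by
    rw [← Real.exp_add]; ring_nf
  nlinarith [Real.exp_pos (s / 2)]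

lemma mono_ve {a b : ℝ} (ha : 2 ≤ a) (hab : a ≤ b) :
    b * Real.exp (-b / 2) ≤ a * Real.exp (-a / 2) := by
  have h1 := Real.add_one_le_exp ((b - a) / 2)
  have h2 : Real.exp (-a / 2) = Real.exp (-b / 2) * Real.exp ((b - a) / 2) := by
    rw [← Real.exp_add]; ring_nf
  have h3 := Real.exp_pos (-b / 2)
  rw [h2]
  have h4 : 0 ≤ a + a * (b - a) / 2 - b := by nlinarith
  nlinarith [mul_le_mul_of_nonneg_left h1 (mul_nonneg (by linarith : (0:ℝ) ≤ a) h3.le),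
    mul_nonneg h3.le h4]

lemma exp4_ge : (54:ℝ) ≤ Real.exp 4 := by
  have h : Real.exp 4 = Real.exp 1 ^ (4:ℕ) := by
    rw [← Real.exp_nat_mul]; norm_num
  rw [h]
  have h2 := Real.exp_one_gt_d9
  calc (54:ℝ) ≤ (2.7182818283:ℝ) ^ (4:ℕ) := by norm_num
    _ ≤ Real.exp 1 ^ (4:ℕ) := by
        apply pow_le_pow_left₀ (by norm_num) h2.le

lemma B2aux {μ : ℝ} (hμ : μ = 1 ∨ 2 ≤ μ) :
    (49 * μ ^ 2 / 4) * Real.exp (-(49 * μ ^ 2 / 8 - 4 * μ)) ≤ 3 := by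
  have hμ1 : 1 ≤ μ := by rcases hμ with h | h <;> linarith [h]
  set s := 49 * μ ^ 2 / 8 - 4 * μ with hsdef
  have hs0 : 0 ≤ s := by rw [hsdef]; nlinarith
  have hk := key_sq hs0
  have hinv : Real.exp (-s) * Real.exp s = 1 := by rw [← Real.exp_add]; simp
  have hp : (0:ℝ) < Real.exp (-s) := Real.exp_pos _
  have hmain : 49 * μ ^ 2 / 4 ≤ 3 * (1 + s / 2) ^ 2 := by
    rcases hμ with h | h
    · subst h; rw [hsdef]; norm_num
    · have h1 : (33 * μ ^ 2 / 16 : ℝ) ≤ 1 + s / 2 := by rw [hsdef]; nlinarith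
      have h2' : (33 * μ ^ 2 / 16) ^ 2 ≤ (1 + s / 2) ^ 2 :=
        pow_le_pow_left₀ (by positivity) h1 2
      have h3 : (1:ℝ) ≤ μ ^ 2 := by nlinarith
      nlinarith [sq_nonneg μ, mul_le_mul_of_nonneg_left h3 (by positivity : (0:ℝ) ≤ μ ^ 2)]
  calc (49 * μ ^ 2 / 4) * Real.exp (-s)
      ≤ (3 * (1 + s / 2) ^ 2) * Real.exp (-s) := mul_le_mul_of_nonneg_right hmain hp.le
    _ ≤ 3 * (Real.exp s * Real.exp (-s)) := by nlinarith [hk, hp]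
    _ = 3 := by rw [mul_comm (Real.exp s), hinv, mul_one]

lemma B2 (m : ℕ) (hm : 1 ≤ m) :
    (49 * (m:ℝ) ^ 2 / 4) * Real.exp (-(49 * (m:ℝ) ^ 2 / 4) / 2) ≤ 3 * Real.exp (-4:ℝ) ^ m := by
  have hμ : (m:ℝ) = 1 ∨ 2 ≤ (m:ℝ) := by
    rcases Nat.lt_or_ge m 2 with h | h
    · left; interval_cases m <;> norm_num
    · right; exact_mod_cast h
  have hr : Real.exp (-4:ℝ) ^ m = Real.exp ((m:ℝ) * (-4)) := by
    rw [Real.exp_nat_mul]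
  rw [hr]
  have hsplit : Real.exp (-(49 * (m:ℝ) ^ 2 / 4) / 2)
      = Real.exp ((m:ℝ) * (-4)) * Real.exp (-(49 * (m:ℝ) ^ 2 / 8 - 4 * m)) := by
    rw [← Real.exp_add]; ring_nf
  rw [hsplit, ← mul_assoc]
  have hb := B2aux hμ
  have hp : (0:ℝ) < Real.exp ((m:ℝ) * (-4)) := Real.exp_pos _
  calc 49 * (m:ℝ) ^ 2 / 4 * Real.exp ((m:ℝ) * (-4)) * Real.exp (-(49 * (m:ℝ) ^ 2 / 8 - 4 * m))
      = (49 * (m:ℝ) ^ 2 / 4 * Real.exp (-(49 * (m:ℝ) ^ 2 / 8 - 4 * m))) * Real.exp ((m:ℝ) * (-4)) := by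
        ring
    _ ≤ 3 * Real.exp ((m:ℝ) * (-4)) := mul_le_mul_of_nonneg_right hb hp.le

lemma Hbound {T x : ℝ} (hT : 0 < T) (hTπ : 2 ≤ T * π) (hxpi : |x| ≤ π / 4) {j : ℤ}
    (hj : j ≠ 0) : |H T j x| ≤ 3 * T ^ 2 * Real.exp (-4:ℝ) ^ j.natAbs := by
  have hπ0 := Real.pi_pos
  have hn1 : (1:ℝ) ≤ (j.natAbs : ℝ) := by
    have := Int.natAbs_pos.mpr hj
    exact_mod_cast this
  have h2jπ : |2 * (j:ℝ) * π| = 2 * π * (j.natAbs : ℝ) := by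
    rw [abs_mul, abs_mul, abs_of_nonneg hπ0.le, abs_int_cast, abs_two]; ring
  have h3 : |2 * (j:ℝ) * π| - |x| ≤ |x + 2 * j * π| := by
    have h := abs_sub_abs_le_abs_sub (2 * (j:ℝ) * π) (-x)
    simp only [abs_neg, sub_neg_eq_add] at h
    calc |2 * (j:ℝ) * π| - |x| ≤ |2 * (j:ℝ) * π + x| := h
      _ = |x + 2 * j * π| := by rw [add_comm]
  have hu : 7 * π * (j.natAbs : ℝ) / 4 ≤ |x + 2 * j * π| := by
    rw [h2jπ] at h3
    nlinarith
  have huT : 7 * (j.natAbs : ℝ) / 2 ≤ |x + 2 * j * π| * T := by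
    have h5 : 7 * π * (j.natAbs : ℝ) / 4 * T ≤ |x + 2 * j * π| * T :=
      mul_le_mul_of_nonneg_right hu hT.le
    nlinarith
  have hv : 49 * (j.natAbs : ℝ) ^ 2 / 4 ≤ (x + 2 * j * π) ^ 2 * T ^ 2 := by
    have h4 : (7 * (j.natAbs : ℝ) / 2) ^ 2 ≤ (|x + 2 * j * π| * T) ^ 2 :=
      pow_le_pow_left₀ (by positivity) huT 2
    have h5 : (|x + 2 * j * π| * T) ^ 2 = (x + 2 * j * π) ^ 2 * T ^ 2 := by
      rw [mul_pow, sq_abs]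
    nlinarith
  set v : ℝ := (x + 2 * j * π) ^ 2 * T ^ 2 with hvdef
  have hv2 : (2:ℝ) ≤ 49 * (j.natAbs : ℝ) ^ 2 / 4 := by nlinarith
  have harg : -(x + 2 * (j:ℝ) * π) ^ 2 * T ^ 2 / 2 = -v / 2 := by rw [hvdef]; ring
  have hHval : H T j x = (v * T ^ 2 - T ^ 2) * Real.exp (-v / 2) := by
    simp only [H]
    rw [harg, hvdef]
  rw [hHval]
  have hexp : (0:ℝ) < Real.exp (-v / 2) := Real.exp_pos _
  have habs : |(v * T ^ 2 - T ^ 2) * Real.exp (-v / 2)| = (v * T ^ 2 - T ^ 2) * Real.exp (-v / 2) := by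
    apply abs_of_nonneg
    apply mul_nonneg _ hexp.le
    nlinarith [sq_nonneg T]
  rw [habs]
  have hmono := mono_ve hv2 (le_trans le_rfl (by linarith : 49 * (j.natAbs : ℝ) ^ 2 / 4 ≤ v))
  have hB := B2 j.natAbs (Int.natAbs_pos.mpr hj)
  have hT2 : (0:ℝ) ≤ T ^ 2 := sq_nonneg T
  calc (v * T ^ 2 - T ^ 2) * Real.exp (-v / 2)
      ≤ T ^ 2 * (v * Real.exp (-v / 2)) := by nlinarith
    _ ≤ T ^ 2 * (49 * (j.natAbs : ℝ) ^ 2 / 4 * Real.exp (-(49 * (j.natAbs : ℝ) ^ 2 / 4) / 2)) := by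
        apply mul_le_mul_of_nonneg_left _ hT2
        have := mono_ve hv2 hv
        convert this using 3 <;> ring
    _ ≤ T ^ 2 * (3 * Real.exp (-4:ℝ) ^ j.natAbs) := mul_le_mul_of_nonneg_left hB hT2
    _ = 3 * T ^ 2 * Real.exp (-4:ℝ) ^ j.natAbs := by ring

lemma zbound {T : ℝ} (hTπ : 2 ≤ T * π) {j : ℤ} (hj : j ≠ 0) :
    Real.exp (-(2 * (j:ℝ) * π) ^ 2 * T ^ 2 / 2) ≤ Real.exp (-4:ℝ) ^ j.natAbs := by
  have hπ0 := Real.pi_pos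
  have hn1 : (1:ℝ) ≤ (j.natAbs : ℝ) := by
    have := Int.natAbs_pos.mpr hj
    exact_mod_cast this
  rw [← Real.exp_nat_mul]
  apply Real.exp_le_exp.2
  have hj2 : ((j:ℝ)) ^ 2 = (j.natAbs : ℝ) ^ 2 := by
    rw [← sq_abs, abs_int_cast]
  have hTπ2 : (4:ℝ) ≤ (T * π) ^ 2 := by nlinarith
  have hexp : (2 * (j:ℝ) * π) ^ 2 * T ^ 2 = 4 * (j.natAbs : ℝ) ^ 2 * (T * π) ^ 2 := by
    rw [← hj2]; ring
  nlinarith [hexp, mul_le_mul_of_nonneg_left hTπ2 (by positivity : (0:ℝ) ≤ 4 * (j.natAbs : ℝ) ^ 2),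
    sq_nonneg ((j.natAbs:ℝ) - 1)]

lemma summable_ite0 {f : ℤ → ℝ} (hf : Summable f) :
    Summable (fun j : ℤ => if j = 0 then (0:ℝ) else f j) := by
  have hsupp : Summable (fun j : ℤ => if j = 0 then f j else 0) := by
    apply summable_of_ne_finset_zero (s := ({0} : Finset ℤ))
    intro b hb
    simp only [Finset.mem_singleton] at hb
    simp [hb]
  have heq : (fun j : ℤ => if j = 0 then (0:ℝ) else f j)
      = fun j => f j - (if j = 0 then f j else 0) := by
    funext j; by_cases hj : j = 0 <;> simp [hj]
  rw [heq]
  exact hf.sub hsupp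

end PGaux

open PGaux

set_option maxHeartbeats 1600000 in
theorem stmt_3 (T : ℝ) (hT : 2 / π ≤ T) :
    ∀ x : ℝ, |x| ≤ 1 / (2 * T) →
      T ^ 2 / 2 ≤ -(deriv (deriv (periodicGaussian T)) x) := by
  intro x hx
  have hπ3 := Real.pi_gt_three
  have hπ4 := Real.pi_lt_four
  have hπ0 := Real.pi_pos
  have hT0 : 0 < T := lt_of_lt_of_le (by positivity) hT
  have hTπ : 2 ≤ T * π := by
    rw [div_le_iff₀ hπ0] at hT; linarith
  have hxpi : |x| ≤ π / 4 := by
    have h1 : 1 / (2 * T) ≤ π / 4 := by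
      rw [div_le_div_iff₀ (by positivity) (by norm_num)]
      nlinarith
    linarith
  have hx1 : |x| ≤ 1 := by nlinarith
  have hball : x ∈ Metric.ball (0:ℝ) 1 := by
    rw [Metric.mem_ball, Real.dist_eq, sub_zero]
    nlinarith
  have hxT : x ^ 2 * T ^ 2 ≤ 1 / 4 := by
    have h1 : |x| * (2 * T) ≤ 1 := by
      rw [le_div_iff₀ (by positivity)] at hx; linarith
    have h2 : (|x| * (2 * T)) ^ 2 ≤ 1 := by
      nlinarith [mul_nonneg (abs_nonneg x) (by linarith : (0:ℝ) ≤ 2 * T)]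
    have h3 : (|x| * (2 * T)) ^ 2 = 4 * (x ^ 2 * T ^ 2) := by
      rw [mul_pow, sq_abs]; ring
    nlinarith
  -- the denominator
  have hzF : (fun j : ℤ => Real.exp (-(2 * (j:ℝ) * π) ^ 2 * T ^ 2 / 2))
      = fun j : ℤ => F T j 0 := by
    funext j; simp [F]
  have hsz : Summable (fun j : ℤ => Real.exp (-(2 * (j:ℝ) * π) ^ 2 * T ^ 2 / 2)) := by
    rw [hzF]; exact summable_F hT0 (by norm_num)
  have hZ1 : 1 ≤ ∑' j : ℤ, Real.exp (-(2 * (j:ℝ) * π) ^ 2 * T ^ 2 / 2) := by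
    have h := Summable.le_tsum hsz 0 (fun j _ => (Real.exp_pos _).le)
    simpa using h
  have hZpos : 0 < ∑' j : ℤ, Real.exp (-(2 * (j:ℝ) * π) ^ 2 * T ^ 2 / 2) := by linarith
  -- derivative identification
  have hEq : deriv (fun y => ∑' j : ℤ, F T j y) =ᶠ[nhds x] fun y => ∑' j : ℤ, G T j y := by
    filter_upwards [Metric.isOpen_ball.mem_nhds hball] with y hy
    exact (hasDerivAt_tsum_F hT0 hy).deriv
  have hpg : periodicGaussian T = fun y => (∑' j : ℤ, F T j y) /
      (∑' j : ℤ, Real.exp (-(2 * (j:ℝ) * π) ^ 2 * T ^ 2 / 2)) := by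
    funext y; simp only [periodicGaussian, F]
  have hd1 : deriv (periodicGaussian T) = fun y => deriv (fun z => ∑' j : ℤ, F T j z) y /
      (∑' j : ℤ, Real.exp (-(2 * (j:ℝ) * π) ^ 2 * T ^ 2 / 2)) := by
    funext y
    rw [hpg]
    exact deriv_div_const _
  have hd2 : deriv (deriv (periodicGaussian T)) x = (∑' j : ℤ, H T j x) /
      (∑' j : ℤ, Real.exp (-(2 * (j:ℝ) * π) ^ 2 * T ^ 2 / 2)) := by
    rw [hd1, deriv_div_const]
    congr 1
    rw [hEq.deriv_eq]
    exact (hasDerivAt_tsum_G hT0 hball).deriv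
  rw [hd2, ← neg_div, le_div_iff₀ hZpos, ← tsum_neg]
  -- now a sum estimate
  have hsH : Summable (fun j : ℤ => H T j x) := summable_H hT0 hx1
  have hsw : Summable (fun j : ℤ => -(H T j x)) := hsH.neg
  have hr0 : (0:ℝ) ≤ Real.exp (-4:ℝ) := (Real.exp_pos _).le
  have hr1 : Real.exp (-4:ℝ) < 1 := by
    rw [Real.exp_lt_one_iff]; norm_num
  have hgeo := hasSum_geom_int hr0 hr1
  have hr54 : Real.exp (-4:ℝ) ≤ 1 / 54 := by
    rw [Real.exp_neg]
    have h := exp4_ge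
    have h2 : (Real.exp 4)⁻¹ ≤ (54:ℝ)⁻¹ := inv_anti₀ (by norm_num) h
    simpa using h2
  have hc : Real.exp (-4:ℝ) / (1 - Real.exp (-4:ℝ)) + 0
      + Real.exp (-4:ℝ) / (1 - Real.exp (-4:ℝ)) ≤ 2 / 53 := by
    have h2 : Real.exp (-4:ℝ) / (1 - Real.exp (-4:ℝ)) ≤ 1 / 53 := by
      rw [div_le_div_iff₀ (by linarith) (by norm_num)]
      linarith
    linarith
  -- per-term bound for the nonzero terms
  have hterm : ∀ j : ℤ, |if j = 0 then (0:ℝ) else -(H T j x)|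
      ≤ 3 * T ^ 2 * (if j = 0 then (0:ℝ) else Real.exp (-4:ℝ) ^ j.natAbs) := by
    intro j
    by_cases hj : j = 0
    · simp [hj]
    · simp only [hj, if_false, abs_neg]
      exact Hbound hT0 hTπ hxpi hj
  have hsb : Summable (fun j : ℤ => 3 * T ^ 2 *
      (if j = 0 then (0:ℝ) else Real.exp (-4:ℝ) ^ j.natAbs)) := hgeo.summable.mul_left _
  have hitew : Summable (fun j : ℤ => if j = 0 then (0:ℝ) else -(H T j x)) := summable_ite0 hsw
  have hnormsum : Summable (fun j : ℤ => |if j = 0 then (0:ℝ) else -(H T j x)|) :=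
    Summable.of_nonneg_of_le (fun j => abs_nonneg _) hterm hsb
  have hS : |∑' j : ℤ, (if j = 0 then (0:ℝ) else -(H T j x))| ≤ 3 * T ^ 2 * (2 / 53) := by
    have habs : |∑' j : ℤ, (if j = 0 then (0:ℝ) else -(H T j x))|
        ≤ ∑' j : ℤ, |if j = 0 then (0:ℝ) else -(H T j x)| := by
      have h := norm_tsum_le_tsum_norm
        (f := fun j : ℤ => if j = 0 then (0:ℝ) else -(H T j x))
        (by simpa [Real.norm_eq_abs] using hnormsum)
      simpa [Real.norm_eq_abs] using h
    have h2 : ∑' j : ℤ, |if j = 0 then (0:ℝ) else -(H T j x)|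
        ≤ ∑' j : ℤ, 3 * T ^ 2 * (if j = 0 then (0:ℝ) else Real.exp (-4:ℝ) ^ j.natAbs) :=
      Summable.tsum_le_tsum hterm hnormsum hsb
    have h3 : ∑' j : ℤ, 3 * T ^ 2 * (if j = 0 then (0:ℝ) else Real.exp (-4:ℝ) ^ j.natAbs)
        = 3 * T ^ 2 * ∑' j : ℤ, (if j = 0 then (0:ℝ) else Real.exp (-4:ℝ) ^ j.natAbs) :=
      tsum_mul_left
    have h4 : 3 * T ^ 2 * ∑' j : ℤ, (if j = 0 then (0:ℝ) else Real.exp (-4:ℝ) ^ j.natAbs)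
        ≤ 3 * T ^ 2 * (2 / 53) := by
      apply mul_le_mul_of_nonneg_left _ (by positivity)
      rw [hgeo.tsum_eq]
      exact hc
    linarith
  -- the central term
  have hw0 : 21 / 32 * T ^ 2 ≤ -(H T 0 x) := by
    have hH0 : H T 0 x = (x ^ 2 * T ^ 2 * T ^ 2 - T ^ 2) * Real.exp (-x ^ 2 * T ^ 2 / 2) := by
      simp [H]
    have hexp : (7:ℝ) / 8 ≤ Real.exp (-x ^ 2 * T ^ 2 / 2) := by
      have h := Real.add_one_le_exp (-x ^ 2 * T ^ 2 / 2)
      nlinarith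
    have h1 : (3:ℝ) / 4 * T ^ 2 ≤ T ^ 2 - x ^ 2 * T ^ 2 * T ^ 2 := by
      nlinarith [sq_nonneg T]
    have h2 := mul_le_mul h1 hexp (by norm_num) (by nlinarith [sq_nonneg T])
    rw [hH0]
    nlinarith
  -- the Z bound
  have hitez : Summable (fun j : ℤ => if j = 0 then (0:ℝ)
      else Real.exp (-(2 * (j:ℝ) * π) ^ 2 * T ^ 2 / 2)) := summable_ite0 hsz
  have hZle : (∑' j : ℤ, Real.exp (-(2 * (j:ℝ) * π) ^ 2 * T ^ 2 / 2)) ≤ 1 + 2 / 53 := by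
    have hsplit := Summable.tsum_eq_add_tsum_ite hsz 0
    have hz0 : Real.exp (-(2 * ((0:ℤ):ℝ) * π) ^ 2 * T ^ 2 / 2) = 1 := by
      norm_num
    have hle : ∑' j : ℤ, (if j = 0 then (0:ℝ)
        else Real.exp (-(2 * (j:ℝ) * π) ^ 2 * T ^ 2 / 2))
        ≤ ∑' j : ℤ, (if j = 0 then (0:ℝ) else Real.exp (-4:ℝ) ^ j.natAbs) := by
      apply Summable.tsum_le_tsum _ hitez hgeo.summable
      intro j
      by_cases hj : j = 0
      · simp [hj]
      · simp only [hj, if_false]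
        exact zbound hTπ hj
    rw [hgeo.tsum_eq] at hle
    rw [hsplit, hz0]
    linarith
  -- conclusion
  have hsplitW := Summable.tsum_eq_add_tsum_ite hsw 0
  rw [hsplitW]
  have hfin1 : T ^ 2 / 2 * (∑' j : ℤ, Real.exp (-(2 * (j:ℝ) * π) ^ 2 * T ^ 2 / 2))
      ≤ T ^ 2 / 2 * (1 + 2 / 53) := mul_le_mul_of_nonneg_left hZle (by positivity)
  have hfin2 : -(3 * T ^ 2 * (2 / 53)) ≤ ∑' j : ℤ, (if j = 0 then (0:ℝ) else -(H T j x)) := by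
    have h := neg_abs_le (∑' j : ℤ, (if j = 0 then (0:ℝ) else -(H T j x)))
    linarith
  linarith [sq_nonneg T]
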